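/- Let Φ be a graph property, H a finite graph, and k a positive integer, and define the graph property (Φ−H) by (Φ−H)(G) = 1 iff Φ(G ⊎ H) = 1. Then for every finite graph G, the number of k-element vertex subsets X ⊆ V(G) whose induced subgraph G[X] satisfies (Φ−H) equals Σ_{X ⊆ V(H)} (−1)^{|X|} · #IndSub(Φ, k + |V(H)|, G ⊎ (H ∖ X)), where the sum ranges over all subsets X of V(H) and H ∖ X denotes H with the vertices in X (and all incident edges) removed. -/

import Mathlib

open scoped Classical

/-!
Statement 15: For a graph property `Φ`, a graph `H`, a positive integer `k`, and the
property `(Φ−H)(G) = 1 iff Φ(G ⊎ H) = 1`, the number of `k`-element vertex subsets of a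
graph `G` inducing a subgraph satisfying `(Φ−H)` equals
`Σ_{X ⊆ V(H)} (−1)^{|X|} · #IndSub(Φ, k + |V(H)|, G ⊎ (H ∖ X))`.
-/

/-- `#IndSub(Φ, k, G)`: the number of `k`-element vertex subsets `Y ⊆ V(G)` whose
induced subgraph `G[Y]` satisfies `Φ`. -/
noncomputable def countIndSub {α : Type} [Fintype α]
    (Φ : ∀ (β : Type) [Fintype β], SimpleGraph β → Prop) (k : ℕ) (G : SimpleGraph α) : ℕ :=
  (Finset.univ.filter
    (fun Y : Finset α => Y.card = k ∧ Φ (↑Y : Set α) (G.induce (↑Y : Set α)))).card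

namespace Stmt15Aux

open Finset

variable {α β : Type*}

/-- Sum of two graph embeddings. -/
def sumMapEmb {α' β' : Type*} {A : SimpleGraph α} {B : SimpleGraph β}
    {A' : SimpleGraph α'} {B' : SimpleGraph β'} (f : A ↪g A') (g : B ↪g B') :
    (A ⊕g B) ↪g (A' ⊕g B') where
  toFun := Sum.map f g
  inj' := f.injective.sumMap g.injective
  map_rel_iff' := by rintro (u|u) (v|v) <;> simp [f.map_rel_iff, g.map_rel_iff]

@[simp] lemma sumMapEmb_apply {α' β' : Type*} {A : SimpleGraph α} {B : SimpleGraph β}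
    {A' : SimpleGraph α'} {B' : SimpleGraph β'} (f : A ↪g A') (g : B ↪g B') (x : α ⊕ β) :
    sumMapEmb f g x = Sum.map f g x := rfl

/-- A graph embedding induces an isomorphism between induced subgraphs. -/
noncomputable def inducedIso {A : SimpleGraph α} {B : SimpleGraph β}
    (f : A ↪g B) (s : Set α) : A.induce s ≃g B.induce (⇑f '' s) where
  toEquiv := Equiv.Set.image f s f.injective
  map_rel_iff' := by
    rintro ⟨u, hu⟩ ⟨v, hv⟩
    simp [Equiv.Set.image, Equiv.Set.imageOfInjOn, f.map_rel_iff]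

/-- An embedding realizes its source as the subgraph induced on its range. -/
noncomputable def isoOfRange {A : SimpleGraph α} {B : SimpleGraph β} (f : A ↪g B) :
    A ≃g B.induce (Set.range ⇑f) := by
  rw [← Set.image_univ]
  exact (SimpleGraph.induceUnivIso A).symm.trans (inducedIso f Set.univ)

lemma Φ_congr_set {β : Type} [Fintype β]
    (Φ : ∀ (γ : Type) [Fintype γ], SimpleGraph γ → Prop)
    (B : SimpleGraph β) {s t : Set β} (h : s = t) :
    ∀ {i1 : Fintype s} {i2 : Fintype t},
    @Φ s i1 (B.induce s) ↔ @Φ t i2 (B.induce t) := by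
  subst h; intro i1 i2; rw [Subsingleton.elim i1 i2]

/-- Counting induced subgraphs with `Φ` in `A` via an embedding `A ↪g B`. -/
lemma count_emb {α β : Type} [Fintype α] [Fintype β]
    (Φ : ∀ (γ : Type) [Fintype γ], SimpleGraph γ → Prop)
    (hΦiso : ∀ (γ δ : Type) [Fintype γ] [Fintype δ]
      (A : SimpleGraph γ) (B : SimpleGraph δ), Nonempty (A ≃g B) → (Φ γ A ↔ Φ δ B))
    {A : SimpleGraph α} {B : SimpleGraph β} (e : A ↪g B) (n : ℕ) :
    countIndSub Φ n A =
      (Finset.univ.filter (fun Y : Finset β => Y.card = n ∧ (↑Y : Set β) ⊆ Set.range ⇑e ∧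
        Φ (↑Y : Set β) (B.induce (↑Y : Set β)))).card := by
  unfold countIndSub
  apply Finset.card_bij (fun Y _ => Y.map e.toEmbedding)
  · intro Y hY
    simp only [mem_filter, mem_univ, true_and] at hY ⊢
    obtain ⟨hcard, hΦ⟩ := hY
    have hcoe : (↑(Y.map e.toEmbedding) : Set β) = ⇑e '' ↑Y := by
      simp [Finset.coe_map]
    refine ⟨by simp [hcard], ?_, ?_⟩
    · rw [hcoe]; exact Set.image_subset_range _ _
    · exact (Φ_congr_set Φ B hcoe).mpr ((hΦiso _ _ _ _ ⟨inducedIso e (↑Y : Set α)⟩).mp hΦ)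
  · intro Y₁ h₁ Y₂ h₂ h
    exact Finset.map_injective _ h
  · intro Y hY
    simp only [mem_filter, mem_univ, true_and] at hY
    obtain ⟨hcard, hsub, hΦ⟩ := hY
    set Z := Y.preimage ⇑e (e.injective.injOn) with hZ
    have hmap : Z.map e.toEmbedding = Y := by
      rw [Finset.map_eq_image, show (⇑e.toEmbedding : α → β) = ⇑e from rfl, hZ,
        Finset.image_preimage]
      ext x
      simp only [mem_filter, and_iff_left_iff_imp]
      intro hx
      exact hsub hx
    have hcoe : (↑(Z.map e.toEmbedding) : Set β) = ⇑e '' ↑Z := by simp [Finset.coe_map]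
    refine ⟨Z, ?_, hmap⟩
    simp only [mem_filter, mem_univ, true_and]
    constructor
    · have h1 : (Z.map e.toEmbedding).card = Z.card := Finset.card_map _
      rw [hmap] at h1
      omega
    · refine (hΦiso _ _ _ _ ⟨inducedIso e (↑Z : Set α)⟩).mpr ?_
      refine (Φ_congr_set Φ B ?_).mp hΦ
      rw [← hcoe, hmap]

end Stmt15Aux

theorem stmt_15 {V W : Type} [Fintype V] [Fintype W]
    (Φ : ∀ (β : Type) [Fintype β], SimpleGraph β → Prop)
    (hΦiso : ∀ (β γ : Type) [Fintype β] [Fintype γ]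
      (A : SimpleGraph β) (B : SimpleGraph γ), Nonempty (A ≃g B) → (Φ β A ↔ Φ γ B))
    (G : SimpleGraph V) (H : SimpleGraph W) (k : ℕ) (hk : 0 < k) :
    -- the number of `k`-subsets of `V(G)` whose induced subgraph satisfies `(Φ − H)`
    ((Finset.univ.filter (fun Y : Finset V =>
        Y.card = k ∧ Φ _ ((G.induce (↑Y : Set V)) ⊕g H))).card : ℤ) =
      -- equals the inclusion-exclusion sum over all subsets `X ⊆ V(H)`
      ∑ X : Finset W, (-1 : ℤ) ^ X.card *
        (countIndSub Φ (k + Fintype.card W)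
          (G ⊕g (H.induce ((↑X : Set W)ᶜ))) : ℤ) := by
  classical
  open Finset Stmt15Aux in
  set n := k + Fintype.card W with hn
  set 𝒢 := G ⊕g H with h𝒢
  set S : Finset (Finset (V ⊕ W)) := univ.filter
    (fun Y : Finset (V ⊕ W) => Y.card = n ∧ Φ (↑Y : Set (V ⊕ W)) (𝒢.induce (↑Y : Set (V ⊕ W))))
    with hS
  -- Step A
  have key : ∀ X : Finset W,
      (countIndSub Φ n (G ⊕g (H.induce ((↑X : Set W)ᶜ))) : ℤ)
        = ∑ Y ∈ S, (if (∀ w ∈ X, Sum.inr w ∉ Y) then (1 : ℤ) else 0) := by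
    intro X
    set e : (G ⊕g (H.induce ((↑X : Set W)ᶜ))) ↪g 𝒢 :=
      sumMapEmb (SimpleGraph.Embedding.refl) (SimpleGraph.Embedding.induce _) with he
    have hee : ⇑e = Sum.map id Subtype.val := rfl
    have hr : ∀ z : V ⊕ W, z ∈ Set.range ⇑e ↔ ∀ w ∈ X, z ≠ Sum.inr w := by
      rintro (v | w)
      · exact iff_of_true ⟨Sum.inl v, rfl⟩ (by simp)
      · rw [hee]
        constructor
        · rintro ⟨(u | u), hu⟩
          · simp at hu
          · simp only [Sum.map_inr] at hu
            have hw : (u : W) = w := by simpa using hu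
            intro w' hw' hww'
            have h1 : w = w' := by simpa using hww'
            have h2 := u.2
            rw [hw, h1] at h2
            simp at h2
            exact h2 hw'
        · intro h
          have hw : w ∉ X := fun hwX => (h w hwX) rfl
          exact ⟨Sum.inr ⟨w, by simp [hw]⟩, rfl⟩
    rw [count_emb Φ hΦiso e n]
    have hfil : (univ.filter (fun Y : Finset (V ⊕ W) => Y.card = n ∧
          (↑Y : Set (V ⊕ W)) ⊆ Set.range ⇑e ∧
          Φ (↑Y : Set (V ⊕ W)) (𝒢.induce (↑Y : Set (V ⊕ W)))))
        = S.filter (fun Y => ∀ w ∈ X, Sum.inr w ∉ Y) := by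
      ext Y
      simp only [hS, mem_filter, mem_univ, true_and]
      constructor
      · rintro ⟨h1, h2, h3⟩
        refine ⟨⟨h1, h3⟩, fun w hw hY => ?_⟩
        exact ((hr (Sum.inr w)).mp (h2 hY)) w hw rfl
      · rintro ⟨⟨h1, h3⟩, h2⟩
        refine ⟨h1, fun z hz => (hr z).mpr (fun w hw hzw => ?_), h3⟩
        exact h2 w hw (by rwa [← hzw])
    rw [hfil, Finset.card_filter]
    push_cast
    rfl
  -- Step B: inclusion-exclusion
  have stepB : ∑ X : Finset W, (-1 : ℤ) ^ X.card *
        (countIndSub Φ n (G ⊕g (H.induce ((↑X : Set W)ᶜ))) : ℤ)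
      = ((S.filter (fun Y => ∀ w : W, Sum.inr w ∈ Y)).card : ℤ) := by
    calc ∑ X : Finset W, (-1 : ℤ) ^ X.card *
            (countIndSub Φ n (G ⊕g (H.induce ((↑X : Set W)ᶜ))) : ℤ)
        = ∑ X : Finset W, ∑ Y ∈ S,
            (-1 : ℤ) ^ X.card * (if (∀ w ∈ X, Sum.inr w ∉ Y) then (1 : ℤ) else 0) := by
          simp_rw [key, Finset.mul_sum]
      _ = ∑ Y ∈ S, ∑ X : Finset W,
            (-1 : ℤ) ^ X.card * (if (∀ w ∈ X, Sum.inr w ∉ Y) then (1 : ℤ) else 0) :=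
          Finset.sum_comm
      _ = ∑ Y ∈ S, (if (∀ w : W, Sum.inr w ∈ Y) then (1 : ℤ) else 0) := by
          refine Finset.sum_congr rfl (fun Y _ => ?_)
          set m : Finset W := univ.filter (fun w => Sum.inr w ∉ Y) with hm
          have h1 : ∀ X : Finset W, (∀ w ∈ X, Sum.inr w ∉ Y) ↔ X ⊆ m := by
            intro X
            constructor
            · intro h w hw
              simp only [hm, mem_filter, mem_univ, true_and]
              exact h w hw
            · intro h w hw
              have := h hw
              simp only [hm, mem_filter, mem_univ, true_and] at this
              exact this
          simp_rw [h1, mul_ite, mul_one, mul_zero]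
          rw [← Finset.sum_filter]
          have h2 : univ.filter (fun X : Finset W => X ⊆ m) = m.powerset := by
            ext X; simp
          rw [h2, Finset.sum_powerset_neg_one_pow_card]
          refine if_congr ?_ rfl rfl
          simp [hm, Finset.filter_eq_empty_iff]
      _ = ((S.filter (fun Y => ∀ w : W, Sum.inr w ∈ Y)).card : ℤ) := by
          rw [Finset.sum_boole]
  rw [stepB]
  norm_cast
  -- Step C: bijection
  set inlE : V ↪ V ⊕ W := ⟨Sum.inl, Sum.inl_injective⟩ with hinl
  set inrE : W ↪ V ⊕ W := ⟨Sum.inr, Sum.inr_injective⟩ with hinr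
  set u : Finset V → Finset (V ⊕ W) := fun Z => Z.map inlE ∪ univ.map inrE with hu
  have hcardu : ∀ Z : Finset V, (u Z).card = Z.card + Fintype.card W := by
    intro Z
    rw [hu]
    rw [Finset.card_union_of_disjoint (by simp [Finset.disjoint_left, hinl, hinr])]
    simp [hinl, hinr]
  have hiso : ∀ Z : Finset V,
      Nonempty (((G.induce (↑Z : Set V)) ⊕g H) ≃g 𝒢.induce (↑(u Z) : Set (V ⊕ W))) := by
    intro Z
    set f : ((G.induce (↑Z : Set V)) ⊕g H) ↪g 𝒢 :=
      sumMapEmb (SimpleGraph.Embedding.induce _) (SimpleGraph.Embedding.refl) with hf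
    have hfe : ⇑f = Sum.map Subtype.val id := rfl
    have hrange : Set.range ⇑f = (↑(u Z) : Set (V ⊕ W)) := by
      rw [hfe]
      ext z
      rcases z with v | w
      · simp only [Set.mem_range, hu, hinl, hinr, Finset.coe_union, Set.mem_union,
          Finset.coe_map, Set.mem_image, Finset.mem_coe, Finset.mem_map,
          Function.Embedding.coeFn_mk]
        constructor
        · rintro ⟨(x | x), hx⟩
          · exact Or.inl ⟨x, by simpa using (by simpa using hx : (x : V) = v) ▸ x.2, by
              simpa using hx⟩
          · simp at hx
        · rintro (⟨x, hx, hxv⟩ | ⟨x, _, hxv⟩)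
          · exact ⟨Sum.inl ⟨x, hx⟩, by simp [hxv]⟩
          · simp at hxv
      · simp only [Set.mem_range, hu, hinl, hinr, Finset.coe_union, Set.mem_union,
          Finset.coe_map, Set.mem_image, Finset.mem_coe, Finset.mem_map,
          Function.Embedding.coeFn_mk]
        constructor
        · intro _; exact Or.inr ⟨w, by simp⟩
        · intro _; exact ⟨Sum.inr w, rfl⟩
    have hI := isoOfRange f
    rw [hrange] at hI
    exact ⟨hI⟩
  have hinlmem : ∀ (Z : Finset V) (v : V), v ∈ Z ↔ Sum.inl v ∈ u Z := by
    intro Z v; simp [hu, hinl, hinr]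
  apply Finset.card_bij (fun Z _ => u Z)
  · intro Z hZ
    simp only [mem_filter, mem_univ, true_and] at hZ
    obtain ⟨hZk, hZΦ⟩ := hZ
    simp only [hS, mem_filter, mem_univ, true_and]
    refine ⟨⟨?_, ?_⟩, ?_⟩
    · rw [hcardu Z, hZk, hn]
    · exact (hΦiso _ _ _ _ (hiso Z)).mp hZΦ
    · intro w
      simp [hu, hinr]
  · intro Z₁ h₁ Z₂ h₂ h
    ext v
    rw [hinlmem Z₁ v, h, ← hinlmem Z₂ v]
  · intro Y hY
    simp only [mem_filter] at hY
    obtain ⟨hYS, hall⟩ := hY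
    simp only [hS, mem_filter, mem_univ, true_and] at hYS
    obtain ⟨hYcard, hYΦ⟩ := hYS
    set Z : Finset V := univ.filter (fun v : V => Sum.inl v ∈ Y) with hZ
    have hUY : u Z = Y := by
      ext z
      rcases z with v | w
      · simp [hu, hinl, hinr, hZ]
      · simp [hu, hinl, hinr, hall w]
    have hZcard : Z.card = k := by
      have := hcardu Z
      rw [hUY, hYcard, hn] at this
      omega
    refine ⟨Z, ?_, hUY⟩
    simp only [mem_filter, mem_univ, true_and]
    refine ⟨hZcard, ?_⟩
    rw [← hUY] at hYΦ
    exact (hΦiso _ _ _ _ (hiso Z)).mpr hYΦ
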